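/- Let M be a positive semidefinite n×n real matrix and q ∈ ℝⁿ. If z̄ and z are both solutions of LCP(q, M) (i.e., both satisfy w ≥ 0, q + M w ≥ 0, wᵀ(q + M w) = 0), then qᵀ(z − z̄) = 0 and (M + Mᵀ)(z − z̄) = 0. -/

import Mathlib

open scoped Matrix
open Matrix

/-- Converse direction: two solutions of a monotone LCP satisfy
`qᵀ(z − z̄) = 0` and `(M + Mᵀ)(z − z̄) = 0`. -/
theorem lcp_solutions_subset_polyhedron {n : ℕ}
    (M : Matrix (Fin n) (Fin n) ℝ) (q : Fin n → ℝ)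
    (hMpsd : ∀ x : Fin n → ℝ, 0 ≤ x ⬝ᵥ M.mulVec x)
    (zbar z : Fin n → ℝ)
    (hzbar_nonneg : ∀ i, 0 ≤ zbar i)
    (hzbar_feas : ∀ i, 0 ≤ q i + M.mulVec zbar i)
    (hzbar_comp : zbar ⬝ᵥ (q + M.mulVec zbar) = 0)
    (hz_nonneg : ∀ i, 0 ≤ z i)
    (hz_feas : ∀ i, 0 ≤ q i + M.mulVec z i)
    (hz_comp : z ⬝ᵥ (q + M.mulVec z) = 0) :
    q ⬝ᵥ (z - zbar) = 0 ∧ (M + M.transpose).mulVec (z - zbar) = 0 := by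
  set x : Fin n → ℝ := z - zbar with hxdef
  -- cross terms are nonnegative
  have ha : 0 ≤ z ⬝ᵥ (q + M.mulVec zbar) :=
    Finset.sum_nonneg fun i _ => mul_nonneg (hz_nonneg i) (hzbar_feas i)
  have hb : 0 ≤ zbar ⬝ᵥ (q + M.mulVec z) :=
    Finset.sum_nonneg fun i _ => mul_nonneg (hzbar_nonneg i) (hz_feas i)
  -- expand the quadratic form
  have hexp : x ⬝ᵥ M.mulVec x
      = -(z ⬝ᵥ (q + M.mulVec zbar) + zbar ⬝ᵥ (q + M.mulVec z)) := by
    have h1 : z ⬝ᵥ M.mulVec z = -(z ⬝ᵥ q) := by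
      have := hz_comp
      rw [dotProduct_add] at this
      linarith
    have h2 : zbar ⬝ᵥ M.mulVec zbar = -(zbar ⬝ᵥ q) := by
      have := hzbar_comp
      rw [dotProduct_add] at this
      linarith
    rw [hxdef]
    rw [Matrix.mulVec_sub, dotProduct_sub, sub_dotProduct, sub_dotProduct,
      dotProduct_add, dotProduct_add, h1, h2]
    ring
  have hquad0 : x ⬝ᵥ M.mulVec x = 0 :=
    le_antisymm (by rw [hexp]; linarith) (hMpsd x)
  have ha0 : z ⬝ᵥ (q + M.mulVec zbar) = 0 := by
    rw [hexp] at hquad0; linarith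
  have hb0 : zbar ⬝ᵥ (q + M.mulVec z) = 0 := by
    rw [hexp] at hquad0; linarith
  -- the symmetrized matrix is PosSemidef
  have hSsd : (M + M.transpose).PosSemidef := by
    refine Matrix.PosSemidef.of_dotProduct_mulVec_nonneg ?_ ?_
    · show (M + Mᵀ)ᴴ = M + Mᵀ
      ext i j
      simp [Matrix.conjTranspose_apply, add_comm]
    · intro y
      have hsym : y ⬝ᵥ (M.transpose.mulVec y) = y ⬝ᵥ M.mulVec y := by
        rw [Matrix.mulVec_transpose, dotProduct_comm, ← Matrix.dotProduct_mulVec]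
      simpa [Matrix.add_mulVec, dotProduct_add, hsym, star, two_mul] using
        add_nonneg (hMpsd y) (hMpsd y)
  have hker : (M + M.transpose).mulVec x = 0 := by
    apply (hSsd.dotProduct_mulVec_zero_iff x).mp
    have hsym : x ⬝ᵥ (M.transpose.mulVec x) = x ⬝ᵥ M.mulVec x := by
      rw [Matrix.mulVec_transpose, dotProduct_comm, ← Matrix.dotProduct_mulVec]
    simp [Matrix.add_mulVec, dotProduct_add, hsym, hquad0, star]
  refine ⟨?_, hker⟩
  -- q ⬝ x = 0 via z ⬝ (S x) = 0
  have hz_dot : z ⬝ᵥ ((M + M.transpose).mulVec x) = 0 := by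
    rw [hker, dotProduct_zero]
  have h1 : z ⬝ᵥ M.mulVec z = -(z ⬝ᵥ q) := by
    have := hz_comp; rw [dotProduct_add] at this; linarith
  have h2 : z ⬝ᵥ M.mulVec zbar = -(z ⬝ᵥ q) := by
    have := ha0; rw [dotProduct_add] at this; linarith
  have h3 : zbar ⬝ᵥ M.mulVec z = -(zbar ⬝ᵥ q) := by
    have := hb0; rw [dotProduct_add] at this; linarith
  have hsymz : z ⬝ᵥ (M.transpose.mulVec x) = x ⬝ᵥ M.mulVec z := by
    rw [Matrix.mulVec_transpose, dotProduct_comm, ← Matrix.dotProduct_mulVec]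
  have hexpand : z ⬝ᵥ ((M + M.transpose).mulVec x)
      = (zbar ⬝ᵥ q) - (z ⬝ᵥ q) := by
    rw [Matrix.add_mulVec, dotProduct_add, hsymz, hxdef, Matrix.mulVec_sub,
      dotProduct_sub, sub_dotProduct, h1, h2, h3]
    ring
  rw [dotProduct_sub]
  rw [hexpand] at hz_dot
  have hc1 : q ⬝ᵥ z = z ⬝ᵥ q := dotProduct_comm _ _
  have hc2 : q ⬝ᵥ zbar = zbar ⬝ᵥ q := dotProduct_comm _ _
  linarith
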